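/- The operator δ'(u) = e^α·(δ(u) − u) satisfies the twisted product rule δ'(u·v) = δ'(u)·v + s(u)·δ'(v) for all u, v ∈ ℤ[M]. -/

import Mathlib

open AddMonoidAlgebra

noncomputable section

/-- The reflection `λ ↦ λ - c(λ) • α` associated to a root `α` and coroot `c`,
as an additive homomorphism of the weight lattice `M`. -/
def demazureReflection {M : Type*} [AddCommGroup M] (α : M) (c : M →+ ℤ) : M →+ M where
  toFun := fun lam => lam - c lam • α
  map_zero' := by simp
  map_add' := fun x y => by simp only [map_add, add_smul]; abel

/-- The ring endomorphism of the group algebra `ℤ[M]` induced by the reflection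
`s(λ) = λ - c(λ)·α`; it sends `e^λ` to `e^{s(λ)}`. -/
def demazureReflectionAlg {M : Type*} [AddCommGroup M] (α : M) (c : M →+ ℤ) :
    AddMonoidAlgebra ℤ M →+* AddMonoidAlgebra ℤ M :=
  mapDomainRingHom ℤ (demazureReflection α c)
/-- Twisted product rule: δ'(uv) = δ'(u) v + s(u) δ'(v), where δ'(u) = e^α (δ(u) - u). -/
theorem demazure_prime_twisted_product {M : Type*} [AddCommGroup M]
    [Module.Free ℤ M] [Module.Finite ℤ M]
    (α : M) (hα : α ≠ 0) (c : M →+ ℤ) (hc : c α = 2)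
    (δ : AddMonoidAlgebra ℤ M →ₗ[ℤ] AddMonoidAlgebra ℤ M)
    (hδ : ∀ u : AddMonoidAlgebra ℤ M,
      (1 - single (-α) 1) * δ u = u - single (-α) 1 * demazureReflectionAlg α c u) :
    ∀ u v : AddMonoidAlgebra ℤ M,
      single α 1 * (δ (u * v) - u * v) =
        (single α 1 * (δ u - u)) * v +
          demazureReflectionAlg α c u * (single α 1 * (δ v - v)) := by
  haveI : UniqueSums M := UniqueSums.of_injective_addHom
    (Module.Free.chooseBasis ℤ M).repr.toLinearMap.toAddMonoidHom
    (by exact (Module.Free.chooseBasis ℤ M).repr.injective) inferInstance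
  intro u v
  set s := demazureReflectionAlg α c with hs
  set t := (single (-α) 1 : AddMonoidAlgebra ℤ M) with ht
  set a := (single α 1 : AddMonoidAlgebra ℤ M) with ha
  have hat : a * t = 1 := by
    rw [ha, ht, single_mul_single]
    simp [one_def]
  have hne : (1 : AddMonoidAlgebra ℤ M) - t ≠ 0 := by
    refine sub_ne_zero.mpr ?_
    rw [one_def, ht]
    intro h
    rcases AddMonoidAlgebra.single_inj.mp h with ⟨h1, -⟩ | ⟨h1, -⟩
    · exact hα (by simpa using h1.symm)
    · exact one_ne_zero h1
  -- from hδ, express a * (δ u - u) = δ u - s u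
  have key : ∀ w : AddMonoidAlgebra ℤ M, a * (δ w - w) = δ w - s w := by
    intro w
    linear_combination a * (hδ w) + (δ w - s w) * hat
  have hsuv : s (u * v) = s u * s v := map_mul s u v
  have h2 : (1 - t) * δ (u * v) = (1 - t) * (δ u * v + s u * δ v - s u * v) := by
    have huv := hδ (u * v)
    rw [hsuv] at huv
    linear_combination huv - v * hδ u - s u * hδ v
  have h3 : δ (u * v) = δ u * v + s u * δ v - s u * v :=
    mul_left_cancel₀ hne h2
  rw [key (u * v), key u, key v, hsuv, h3]
  ring
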